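/- arXiv:2506.12271 — 3 statements merged into one kernel-verified Lean document; each statement's English description precedes it below -/
import Mathlib

section
/- Let G be an oriented hypergraph and let N be a tail-equivalence class of contributors of G that contains a contributor which is not edge-monic (equivalently, there are distinct vertices v₁ ≠ v₂ with ω(t_{v₁}) = ω(t_{v₂})). Then the sum of csgn(c) over all c ∈ N equals 0. -/
open scoped Classical

noncomputable section

/-- An oriented hypergraph `G = (V, E, I, ς, ω, σ)`: `vtx = ς` assigns each incidence
its vertex, `edg = ω` assigns each incidence its edge, and `sgn = σ` is its sign. -/
structure OHG (V E I : Type*) where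
  vtx : I → V
  edg : I → E
  sgn : I → ℤˣ

variable {V E I : Type*} [Fintype V] [DecidableEq V] [Fintype E] [DecidableEq E]
  [Fintype I] [DecidableEq I]

/-- A contributor `c = (t, h)`: each tail sits at its vertex, tail and head of each
`P₁`-map share an edge, and the head map `v ↦ ς (h v)` is a bijection of `V`. -/
def IsContributor (G : OHG V E I) (c : (V → I) × (V → I)) : Prop :=
  (∀ v, G.vtx (c.1 v) = v) ∧ (∀ v, G.edg (c.1 v) = G.edg (c.2 v)) ∧
    Function.Bijective fun v => G.vtx (c.2 v)

/-- The orbit of `v` under iteration of `f` (for `f` a bijection of a finite type this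
is the full cycle of `v`). -/
def orbitOf (f : V → V) (v : V) : Finset V :=
  Finset.univ.filter fun w => ∃ n : ℕ, f^[n] v = w

/-- The set of orbits of `f`. -/
def orbitsOf (f : V → V) : Finset (Finset V) :=
  Finset.univ.image (orbitOf f)

/-- `bs c`: the number of backsteps of a contributor. -/
def bsC (c : (V → I) × (V → I)) : ℕ :=
  (Finset.univ.filter fun v => c.1 v = c.2 v).card

/-- `ec c`: the number of orbits (components) of even cardinality. -/
def ecC (G : OHG V E I) (c : (V → I) × (V → I)) : ℕ :=
  ((orbitsOf fun v => G.vtx (c.2 v)).filter fun O => Even O.card).card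

/-- A negative orbit: not a single backstep, and the product of the adjacency signs
`-σ(t_v)·σ(h_v)` over the orbit is `-1`. -/
def NegOrbit (G : OHG V E I) (c : (V → I) × (V → I)) (O : Finset V) : Prop :=
  (¬ ∃ v, O = {v} ∧ c.1 v = c.2 v) ∧
    ∏ v ∈ O, (-(G.sgn (c.1 v) * G.sgn (c.2 v))) = (-1 : ℤˣ)

/-- `nc c`: the number of negative orbits (components). -/
def ncC (G : OHG V E I) (c : (V → I) × (V → I)) : ℕ :=
  ((orbitsOf fun v => G.vtx (c.2 v)).filter (NegOrbit G c)).card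

/-- The contributor sign `csgn c = (-1) ^ (ec c + nc c + bs c)`. -/
def csgnC (G : OHG V E I) (c : (V → I) × (V → I)) : ℤ :=
  (-1) ^ (ecC G c + ncC G c + bsC c)

/-- A contributor is edge-monic when its tail edges are pairwise distinct. -/
def EdgeMonic (G : OHG V E I) (c : (V → I) × (V → I)) : Prop :=
  Function.Injective fun v => G.edg (c.1 v)

/-- Tail-equivalence: identical tail maps. -/
def TailEquiv (c c' : (V → I) × (V → I)) : Prop := c.1 = c'.1

/-- Head-equivalence: identical sets of head incidences. -/
def HeadEquiv (c c' : (V → I) × (V → I)) : Prop := Set.range c.2 = Set.range c'.2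


section AuxLemmas

lemma mem_orbitOf_iff (π : Equiv.Perm V) (a w : V) :
    w ∈ orbitOf (⇑π) a ↔ π.SameCycle a w := by
  simp only [orbitOf, Finset.mem_filter, Finset.mem_univ, true_and]
  constructor
  · rintro ⟨n, rfl⟩
    exact ⟨(n : ℤ), by rw [zpow_natCast, Equiv.Perm.coe_pow]⟩
  · intro h
    obtain ⟨i, _, hi⟩ := h.exists_pow_eq'
    exact ⟨i, by rw [← Equiv.Perm.coe_pow]; exact hi⟩

lemma self_mem_orbitOf (f : V → V) (a : V) : a ∈ orbitOf f a := by
  simp only [orbitOf, Finset.mem_filter, Finset.mem_univ, true_and]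
  exact ⟨0, rfl⟩

lemma orbitOf_eq_of_mem (π : Equiv.Perm V) {a b : V} (h : b ∈ orbitOf (⇑π) a) :
    orbitOf (⇑π) a = orbitOf (⇑π) b := by
  rw [mem_orbitOf_iff] at h
  ext w
  rw [mem_orbitOf_iff, mem_orbitOf_iff]
  exact ⟨fun h' => h.symm.trans h', fun h' => h.trans h'⟩

lemma orbitOf_fixed {f : V → V} {a : V} (h : f a = a) : orbitOf f a = {a} := by
  ext w
  simp only [orbitOf, Finset.mem_filter, Finset.mem_univ, true_and, Finset.mem_singleton]
  constructor
  · rintro ⟨n, rfl⟩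
    rw [Function.iterate_fixed h]
  · rintro rfl; exact ⟨0, rfl⟩

lemma prod_over_orbits {M : Type*} [CommMonoid M] (π : Equiv.Perm V) (g : V → M) :
    ∏ O ∈ orbitsOf (⇑π), ∏ v ∈ O, g v = ∏ v, g v := by
  rw [← Finset.prod_biUnion]
  · congr 1
    apply Finset.eq_univ_of_forall
    intro v
    rw [Finset.mem_biUnion]
    exact ⟨orbitOf (⇑π) v, Finset.mem_image_of_mem _ (Finset.mem_univ v),
      self_mem_orbitOf _ v⟩
  · intro O₁ h₁ O₂ h₂ hne
    rw [Finset.mem_coe, orbitsOf, Finset.mem_image] at h₁ h₂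
    obtain ⟨a, -, rfl⟩ := h₁
    obtain ⟨b, -, rfl⟩ := h₂
    rw [Function.onFun, Finset.disjoint_left]
    intro x hxa hxb
    exact hne ((orbitOf_eq_of_mem π hxa).trans (orbitOf_eq_of_mem π hxb).symm)

lemma support_cycleOf_eq_orbitOf (π : Equiv.Perm V) {a : V} (ha : π a ≠ a) :
    (π.cycleOf a).support = orbitOf (⇑π) a := by
  ext w
  rw [Equiv.Perm.mem_support_cycleOf_iff' ha, mem_orbitOf_iff]

lemma sign_eq_neg_one_pow_evenOrbits (π : Equiv.Perm V) :
    Equiv.Perm.sign π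
      = (-1 : ℤˣ) ^ (((orbitsOf (⇑π)).filter fun O => Even O.card).card) := by
  have hsign : Equiv.Perm.sign π = ∏ c ∈ π.cycleFactorsFinset, Equiv.Perm.sign c := by
    conv_lhs => rw [← Equiv.Perm.cycleFactorsFinset_noncommProd π]
    rw [Finset.map_noncommProd, Finset.noncommProd_eq_prod]
    rfl
  have hcard : ((orbitsOf (⇑π)).filter fun O => Even O.card).card
      = (π.cycleFactorsFinset.filter fun c => Even c.support.card).card := by
    apply (Finset.card_bij (fun c _ => c.support) ?_ ?_ ?_).symm
    · intro c hc
      rw [Finset.mem_filter] at hc ⊢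
      obtain ⟨hc, hev⟩ := hc
      have hcyc := (Equiv.Perm.mem_cycleFactorsFinset_iff.1 hc).1
      obtain ⟨a, ha⟩ := hcyc.nonempty_support
      have hfix : π a ≠ a := by
        rw [← (Equiv.Perm.mem_cycleFactorsFinset_iff.1 hc).2 a ha]
        exact Equiv.Perm.mem_support.1 ha
      have hco : c = π.cycleOf a := Equiv.Perm.cycle_is_cycleOf ha hc
      refine ⟨?_, hev⟩
      rw [hco, support_cycleOf_eq_orbitOf π hfix]
      exact Finset.mem_image_of_mem _ (Finset.mem_univ a)
    · intro c hc d hd hcd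
      rw [Finset.mem_filter] at hc hd
      obtain ⟨a, ha⟩ := (Equiv.Perm.mem_cycleFactorsFinset_iff.1 hc.1).1.nonempty_support
      have had : a ∈ d.support := by rw [← hcd]; exact ha
      rw [Equiv.Perm.cycle_is_cycleOf ha hc.1, Equiv.Perm.cycle_is_cycleOf had hd.1]
    · intro O hO
      rw [Finset.mem_filter] at hO
      obtain ⟨hO1, hev⟩ := hO
      rw [orbitsOf, Finset.mem_image] at hO1
      obtain ⟨a, -, rfl⟩ := hO1
      have hfix : π a ≠ a := by
        intro h
        rw [orbitOf_fixed h] at hev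
        simp at hev
      refine ⟨π.cycleOf a, ?_, support_cycleOf_eq_orbitOf π hfix⟩
      rw [Finset.mem_filter]
      refine ⟨Equiv.Perm.cycleOf_mem_cycleFactorsFinset_iff.2 (Equiv.Perm.mem_support.2 hfix), ?_⟩
      rwa [support_cycleOf_eq_orbitOf π hfix]
  rw [hsign, hcard]
  have : ∀ c ∈ π.cycleFactorsFinset,
      Equiv.Perm.sign c = if Even c.support.card then (-1 : ℤˣ) else 1 := by
    intro c hc
    have hcyc := (Equiv.Perm.mem_cycleFactorsFinset_iff.1 hc).1
    rw [hcyc.sign]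
    rcases Nat.even_or_odd c.support.card with he | ho
    · rw [if_pos he, he.neg_one_pow]
    · rw [if_neg (Nat.not_even_iff_odd.2 ho), ho.neg_one_pow, neg_neg]
  rw [Finset.prod_congr rfl this, Finset.prod_ite, Finset.prod_const, Finset.prod_const,
    one_pow, mul_one]


variable {E I : Type*} [Fintype E] [DecidableEq E] [Fintype I] [DecidableEq I]

lemma prod_negsgn_eq (G : OHG V E I) (c : (V → I) × (V → I)) (h : IsContributor G c) :
    ∏ v, (-(G.sgn (c.1 v) * G.sgn (c.2 v))) = (-1 : ℤˣ) ^ (ncC G c + bsC c) := by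
  classical
  have hπ := h.2.2
  set π : Equiv.Perm V := Equiv.ofBijective _ hπ with hπdef
  have hcoe : (fun v => G.vtx (c.2 v)) = ⇑π := rfl
  have hBS : ∀ O, (∃ v, O = {v} ∧ c.1 v = c.2 v) →
      ∏ v ∈ O, (-(G.sgn (c.1 v) * G.sgn (c.2 v))) = -1 := by
    rintro O ⟨v, rfl, hv⟩
    rw [Finset.prod_singleton, hv]
    rcases Int.units_eq_one_or (G.sgn (c.2 v)) with hs | hs <;> rw [hs] <;> decide
  have hclass : ∀ O ∈ orbitsOf (⇑π),
      ((∏ v ∈ O, (-(G.sgn (c.1 v) * G.sgn (c.2 v))) = -1) ↔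
        (NegOrbit G c O ∨ ∃ v, O = {v} ∧ c.1 v = c.2 v)) := by
    intro O _
    constructor
    · intro hP
      by_cases hb : ∃ v, O = {v} ∧ c.1 v = c.2 v
      · exact Or.inr hb
      · exact Or.inl ⟨hb, hP⟩
    · rintro (⟨-, hP⟩ | hb)
      · exact hP
      · exact hBS O hb
  have hfe : (orbitsOf (⇑π)).filter
        (fun O => ∏ v ∈ O, (-(G.sgn (c.1 v) * G.sgn (c.2 v))) = -1)
      = ((orbitsOf (⇑π)).filter (NegOrbit G c)) ∪
        ((orbitsOf (⇑π)).filter (fun O => ∃ v, O = {v} ∧ c.1 v = c.2 v)) := by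
    rw [← Finset.filter_or]
    exact Finset.filter_congr hclass
  have hdisj : Disjoint ((orbitsOf (⇑π)).filter (NegOrbit G c))
      ((orbitsOf (⇑π)).filter (fun O => ∃ v, O = {v} ∧ c.1 v = c.2 v)) := by
    rw [Finset.disjoint_left]
    intro O hO1 hO2
    exact (Finset.mem_filter.1 hO1).2.1 (Finset.mem_filter.1 hO2).2
  have hbs : ((orbitsOf (⇑π)).filter (fun O => ∃ v, O = {v} ∧ c.1 v = c.2 v)).card
      = bsC c := by
    symm
    apply Finset.card_bij (fun v _ => ({v} : Finset V))
    · intro v hv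
      rw [Finset.mem_filter] at hv
      have hfix : π v = v := by
        show G.vtx (c.2 v) = v
        rw [← hv.2, h.1 v]
      rw [Finset.mem_filter]
      refine ⟨?_, v, rfl, hv.2⟩
      rw [← orbitOf_fixed hfix]
      exact Finset.mem_image_of_mem _ (Finset.mem_univ v)
    · intro a _ b _ hab
      exact Finset.singleton_injective hab
    · intro O hO
      rw [Finset.mem_filter] at hO
      obtain ⟨-, v, rfl, hv⟩ := hO
      exact ⟨v, Finset.mem_filter.2 ⟨Finset.mem_univ v, hv⟩, rfl⟩
  have hnc : ncC G c = ((orbitsOf (⇑π)).filter (NegOrbit G c)).card := by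
    rw [ncC, hcoe]
  calc ∏ v, (-(G.sgn (c.1 v) * G.sgn (c.2 v)))
      = ∏ O ∈ orbitsOf (⇑π), ∏ v ∈ O, (-(G.sgn (c.1 v) * G.sgn (c.2 v))) :=
        (prod_over_orbits π _).symm
    _ = ∏ O ∈ orbitsOf (⇑π),
          (if (∏ v ∈ O, (-(G.sgn (c.1 v) * G.sgn (c.2 v)))) = -1 then (-1 : ℤˣ) else 1) := by
        refine Finset.prod_congr rfl fun O _ => ?_
        rcases Int.units_eq_one_or (∏ v ∈ O, (-(G.sgn (c.1 v) * G.sgn (c.2 v)))) with hs | hs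
        · rw [hs, if_neg (by decide)]
        · rw [hs, if_pos rfl]
    _ = (-1 : ℤˣ) ^ ((orbitsOf (⇑π)).filter
          (fun O => ∏ v ∈ O, (-(G.sgn (c.1 v) * G.sgn (c.2 v))) = -1)).card := by
        rw [Finset.prod_ite, Finset.prod_const, Finset.prod_const, one_pow, mul_one]
    _ = (-1 : ℤˣ) ^ (ncC G c + bsC c) := by
        rw [hfe, Finset.card_union_of_disjoint hdisj, hnc, hbs]

lemma csgnC_eq (G : OHG V E I) (c : (V → I) × (V → I)) (h : IsContributor G c) :
    csgnC G c = ((Equiv.Perm.sign (Equiv.ofBijective _ h.2.2) *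
      ∏ v, (-(G.sgn (c.1 v) * G.sgn (c.2 v))) : ℤˣ) : ℤ) := by
  rw [prod_negsgn_eq G c h, sign_eq_neg_one_pow_evenOrbits]
  have hec : ecC G c = ((orbitsOf (⇑(Equiv.ofBijective _ h.2.2))).filter
      (fun O => Even O.card)).card := rfl
  rw [csgnC, ← hec, ← pow_add]
  push_cast
  ring

end AuxLemmas

/-- If a tail-equivalence class of contributors of an oriented
hypergraph `G` contains a contributor that is not edge-monic, then the sum of `csgn`
over the class is `0`. -/
theorem sum_csgn_tailEquiv_class_of_not_edgeMonic (G : OHG V E I)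
    (c₀ : (V → I) × (V → I)) (h₀ : IsContributor G c₀) (hne : ¬ EdgeMonic G c₀) :
    ∑ c ∈ Finset.univ.filter (fun c => IsContributor G c ∧ TailEquiv c c₀),
      csgnC G c = 0 := by
  rw [EdgeMonic, Function.not_injective_iff] at hne
  obtain ⟨v₁, v₂, hedge, hv12⟩ := hne
  have hswap : ∀ c : (V → I) × (V → I), IsContributor G c ∧ TailEquiv c c₀ →
      IsContributor G (c.1, c.2 ∘ ⇑(Equiv.swap v₁ v₂)) ∧
        TailEquiv (c.1, c.2 ∘ ⇑(Equiv.swap v₁ v₂)) c₀ := by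
    rintro c ⟨hc, ht⟩
    refine ⟨⟨hc.1, ?_, ?_⟩, ht⟩
    · intro v
      show G.edg (c.1 v) = G.edg (c.2 (Equiv.swap v₁ v₂ v))
      by_cases h1 : v = v₁
      · subst h1
        rw [Equiv.swap_apply_left, ← hc.2.1 v₂, ht, hedge, ← ht]
      · by_cases h2 : v = v₂
        · subst h2
          rw [Equiv.swap_apply_right, ← hc.2.1 v₁, ht, ← hedge, ← ht]
        · rw [Equiv.swap_apply_of_ne_of_ne h1 h2]
          exact hc.2.1 v
    · exact hc.2.2.comp (Equiv.swap v₁ v₂).bijective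
  apply Finset.sum_involution (fun c _ => (c.1, c.2 ∘ ⇑(Equiv.swap v₁ v₂)))
  · intro c hc
    rw [Finset.mem_filter] at hc
    obtain ⟨-, hcont, htail⟩ := hc
    have hcont' := (hswap c ⟨hcont, htail⟩).1
    rw [csgnC_eq G c hcont, csgnC_eq G _ hcont']
    have hperm : Equiv.ofBijective _ hcont'.2.2
        = Equiv.ofBijective _ hcont.2.2 * Equiv.swap v₁ v₂ :=
      Equiv.ext fun v => rfl
    have hsign : Equiv.Perm.sign (Equiv.ofBijective _ hcont'.2.2)
        = -Equiv.Perm.sign (Equiv.ofBijective _ hcont.2.2) := by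
      rw [hperm, map_mul, Equiv.Perm.sign_swap hv12, mul_neg_one]
    have hsplit : ∀ h2 : V → I, ∏ v, (-(G.sgn (c.1 v) * G.sgn (h2 v)))
        = (∏ v, -G.sgn (c.1 v)) * ∏ v, G.sgn (h2 v) := by
      intro h2
      rw [← Finset.prod_mul_distrib]
      exact Finset.prod_congr rfl fun v _ => (neg_mul _ _).symm
    have hprodeq : ∏ v, (-(G.sgn (c.1 v) * G.sgn (c.2 (Equiv.swap v₁ v₂ v))))
        = ∏ v, (-(G.sgn (c.1 v) * G.sgn (c.2 v))) := by
      rw [hsplit (fun v => c.2 (Equiv.swap v₁ v₂ v)), hsplit c.2,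
        Equiv.prod_comp (Equiv.swap v₁ v₂) (fun v => G.sgn (c.2 v))]
    show ((_ : ℤˣ) : ℤ) + ((_ : ℤˣ) : ℤ) = 0
    rw [hsign]
    have : ∏ v, (-(G.sgn ((c.1, c.2 ∘ ⇑(Equiv.swap v₁ v₂)).1 v) *
        G.sgn ((c.1, c.2 ∘ ⇑(Equiv.swap v₁ v₂)).2 v)))
        = ∏ v, (-(G.sgn (c.1 v) * G.sgn (c.2 v))) := hprodeq
    rw [this, neg_mul]
    push_cast
    ring
  · intro c hc _
    rw [Finset.mem_filter] at hc
    intro heq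
    have h1 : c.2 (Equiv.swap v₁ v₂ v₁) = c.2 v₁ := congrFun (congrArg Prod.snd heq) v₁
    rw [Equiv.swap_apply_left] at h1
    have : v₂ = v₁ := hc.2.1.2.2.1 (show G.vtx (c.2 v₂) = G.vtx (c.2 v₁) from by rw [h1])
    exact hv12 this.symm
  · intro c hc
    rw [Finset.mem_filter] at hc ⊢
    exact ⟨Finset.mem_univ _, hswap c hc.2⟩
  · intro c hc
    show ((c.1, (c.2 ∘ ⇑(Equiv.swap v₁ v₂)) ∘ ⇑(Equiv.swap v₁ v₂)) : (V → I) × (V → I)) = c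
    have : (c.2 ∘ ⇑(Equiv.swap v₁ v₂)) ∘ ⇑(Equiv.swap v₁ v₂) = c.2 := by
      funext v
      simp [Function.comp_apply, Equiv.swap_apply_self]
    rw [this]
end
end

section
/- Let G be an oriented hypergraph. For a contributor c of G, define its reversal c̄ by c̄(w) = (h_{π_c⁻¹(w)}, t_{π_c⁻¹(w)}). Then c̄ is a contributor of G with π_{c̄} = π_c⁻¹, reversal is an involution on the set of contributors of G, and two contributors c, c′ are head-equivalent if and only if c̄, c̄′ are tail-equivalent. Consequently, reversal maps the set of tail-equivalence classes bijectively onto the set of head-equivalence classes, with each contributor's associated permutation replaced by its inverse. -/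
open scoped Classical

noncomputable section

variable {V E I : Type*} [Fintype V] [DecidableEq V] [Fintype E] [DecidableEq E]
  [Fintype I] [DecidableEq I]

/-- The inverse of a function `f : V → V` (agreeing with `f⁻¹` when `f` is bijective). -/
noncomputable def invOf (f : V → V) : V → V :=
  fun w => if h : ∃ v, f v = w then Classical.choose h else w

/-- The reversal `c̄` of a contributor `c`, given by
`c̄ w = (h (π⁻¹ w), t (π⁻¹ w))` where `π` is the head map of `c`. -/
noncomputable def revC (G : OHG V E I) (c : (V → I) × (V → I)) : (V → I) × (V → I) :=
  (fun w => c.2 (invOf (fun v => G.vtx (c.2 v)) w),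
   fun w => c.1 (invOf (fun v => G.vtx (c.2 v)) w))


section AuxRev

set_option linter.unusedSectionVars false

variable {V E I : Type*} [Fintype V] [DecidableEq V] [Fintype E] [DecidableEq E]
  [Fintype I] [DecidableEq I]

lemma invOf_right {f : V → V} (hf : Function.Surjective f) (w : V) :
    f (invOf f w) = w := by
  have h : ∃ v, f v = w := hf w
  simp only [invOf, dif_pos h]
  exact Classical.choose_spec h

lemma invOf_left {f : V → V} (hf : Function.Bijective f) (v : V) :
    invOf f (f v) = v :=
  hf.1 (invOf_right hf.2 (f v))

lemma invOf_bijective {f : V → V} (hf : Function.Bijective f) :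
    Function.Bijective (invOf f) := by
  constructor
  · intro a b h
    have h2 := congrArg f h
    rwa [invOf_right hf.2, invOf_right hf.2] at h2
  · intro v; exact ⟨f v, invOf_left hf v⟩

lemma invOf_invOf2 {f : V → V} (hf : Function.Bijective f) :
    invOf (invOf f) = f := by
  funext w
  apply (invOf_bijective hf).1
  rw [invOf_right (invOf_bijective hf).2, invOf_left hf]

lemma rev_headmap (G : OHG V E I) (c : (V → I) × (V → I)) (hc : IsContributor G c) :
    (fun w => G.vtx ((revC G c).2 w)) = invOf fun v => G.vtx (c.2 v) := by
  funext w
  simp only [revC, hc.1]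

lemma rev_contrib (G : OHG V E I) (c : (V → I) × (V → I)) (hc : IsContributor G c) :
    IsContributor G (revC G c) := by
  obtain ⟨h1, h2, h3⟩ := hc
  refine ⟨fun w => invOf_right h3.2 w, fun w => (h2 _).symm, ?_⟩
  rw [rev_headmap G c ⟨h1, h2, h3⟩]
  exact invOf_bijective h3

lemma rev_rev (G : OHG V E I) (c : (V → I) × (V → I)) (hc : IsContributor G c) :
    revC G (revC G c) = c := by
  have h3 := hc.2.2
  have key : invOf (fun w => G.vtx ((revC G c).2 w)) = fun v => G.vtx (c.2 v) := by
    rw [rev_headmap G c hc, invOf_invOf2 h3]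
  refine Prod.ext ?_ ?_
  · funext w
    show (revC G c).2 (invOf (fun v => G.vtx ((revC G c).2 v)) w) = c.1 w
    rw [key]
    show c.1 (invOf (fun v => G.vtx (c.2 v)) (G.vtx (c.2 w))) = c.1 w
    rw [invOf_left h3]
  · funext w
    show (revC G c).1 (invOf (fun v => G.vtx ((revC G c).2 v)) w) = c.2 w
    rw [key]
    show c.2 (invOf (fun v => G.vtx (c.2 v)) (G.vtx (c.2 w))) = c.2 w
    rw [invOf_left h3]

lemma rev_head_iff_tail (G : OHG V E I) (c c' : (V → I) × (V → I))
    (hc : IsContributor G c) (hc' : IsContributor G c') :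
    HeadEquiv c c' ↔ TailEquiv (revC G c) (revC G c') := by
  have h3 := hc.2.2
  have h3' := hc'.2.2
  constructor
  · intro h
    show (revC G c).1 = (revC G c').1
    funext w
    show c.2 (invOf (fun v => G.vtx (c.2 v)) w) = c'.2 (invOf (fun v => G.vtx (c'.2 v)) w)
    have hmem : c.2 (invOf (fun v => G.vtx (c.2 v)) w) ∈ Set.range c'.2 := by
      rw [← h]; exact ⟨_, rfl⟩
    obtain ⟨v, hv⟩ := hmem
    have hw : G.vtx (c'.2 v) = w := by rw [hv]; exact invOf_right h3.2 w
    have hveq : v = invOf (fun u => G.vtx (c'.2 u)) w := by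
      apply h3'.1
      show G.vtx (c'.2 v) = G.vtx (c'.2 (invOf (fun u => G.vtx (c'.2 u)) w))
      rw [hw]
      exact (invOf_right h3'.2 w).symm
    rw [← hveq, hv]
  · intro h
    have h1 : Set.range (revC G c).1 = Set.range c.2 :=
      Set.range_comp c.2 (invOf fun v => G.vtx (c.2 v)) ▸
        (by rw [Set.range_comp, Function.Surjective.range_eq (invOf_bijective h3).2,
          Set.image_univ] : Set.range (c.2 ∘ invOf fun v => G.vtx (c.2 v)) = Set.range c.2)
    have h1' : Set.range (revC G c').1 = Set.range c'.2 := by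
      show Set.range (c'.2 ∘ invOf fun v => G.vtx (c'.2 v)) = Set.range c'.2
      rw [Set.range_comp, Function.Surjective.range_eq (invOf_bijective h3').2,
        Set.image_univ]
    show Set.range c.2 = Set.range c'.2
    rw [← h1, ← h1', h]

lemma rev_image_class (G : OHG V E I) (c₀ : (V → I) × (V → I)) (hc₀ : IsContributor G c₀) :
    Set.image (revC G) {c | IsContributor G c ∧ TailEquiv c c₀}
      = {c | IsContributor G c ∧ HeadEquiv c (revC G c₀)} := by
  ext d
  constructor
  · rintro ⟨c, ⟨hc, ht⟩, rfl⟩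
    refine ⟨rev_contrib G c hc, ?_⟩
    rw [rev_head_iff_tail G (revC G c) (revC G c₀) (rev_contrib G c hc) (rev_contrib G c₀ hc₀),
      rev_rev G c hc, rev_rev G c₀ hc₀]
    exact ht
  · rintro ⟨hd, hh⟩
    refine ⟨revC G d, ⟨rev_contrib G d hd, ?_⟩, rev_rev G d hd⟩
    have := (rev_head_iff_tail G d (revC G c₀) hd (rev_contrib G c₀ hc₀)).mp hh
    rwa [rev_rev G c₀ hc₀] at this

end AuxRev

/-- Reversal sends contributors to contributors, with associated
permutation the inverse of the original one; it is an involution on contributors; two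
contributors are head-equivalent iff their reversals are tail-equivalent; and
consequently taking images under reversal is a bijection from the set of
tail-equivalence classes onto the set of head-equivalence classes. -/
theorem revC_properties (G : OHG V E I) :
    (∀ c, IsContributor G c → IsContributor G (revC G c)) ∧
    (∀ c, IsContributor G c →
      (fun w => G.vtx ((revC G c).2 w)) = invOf fun v => G.vtx (c.2 v)) ∧
    (∀ c, IsContributor G c → revC G (revC G c) = c) ∧
    (∀ c c', IsContributor G c → IsContributor G c' →
      (HeadEquiv c c' ↔ TailEquiv (revC G c) (revC G c'))) ∧
    Set.BijOn (Set.image (revC G))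
      {N | ∃ c₀, IsContributor G c₀ ∧ N = {c | IsContributor G c ∧ TailEquiv c c₀}}
      {N | ∃ c₀, IsContributor G c₀ ∧ N = {c | IsContributor G c ∧ HeadEquiv c c₀}} := by
  refine ⟨rev_contrib G, rev_headmap G, rev_rev G, rev_head_iff_tail G, ?_, ?_, ?_⟩
  · rintro N ⟨c₀, hc₀, rfl⟩
    exact ⟨revC G c₀, rev_contrib G c₀ hc₀, rev_image_class G c₀ hc₀⟩
  · rintro N ⟨c₀, hc₀, rfl⟩ N' ⟨c₀', hc₀', rfl⟩ himg
    rw [rev_image_class G c₀ hc₀, rev_image_class G c₀' hc₀'] at himg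
    have hmem : revC G c₀ ∈ {c | IsContributor G c ∧ HeadEquiv c (revC G c₀')} := by
      rw [← himg]
      exact ⟨rev_contrib G c₀ hc₀, rfl⟩
    have hhe : HeadEquiv (revC G c₀) (revC G c₀') := hmem.2
    have hte : TailEquiv c₀ c₀' := by
      have := (rev_head_iff_tail G (revC G c₀) (revC G c₀')
        (rev_contrib G c₀ hc₀) (rev_contrib G c₀' hc₀')).mp hhe
      rwa [rev_rev G c₀ hc₀, rev_rev G c₀' hc₀'] at this
    have h0 : c₀.1 = c₀'.1 := hte
    ext c
    simp only [Set.mem_setOf_eq, TailEquiv, h0]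
  · rintro M ⟨c₀, hc₀, rfl⟩
    refine ⟨{c | IsContributor G c ∧ TailEquiv c (revC G c₀)},
      ⟨revC G c₀, rev_contrib G c₀ hc₀, rfl⟩, ?_⟩
    rw [rev_image_class G (revC G c₀) (rev_contrib G c₀ hc₀), rev_rev G c₀ hc₀]
end
end

section
/- Let G be an oriented hypergraph and let φ be an injection from U ⊆ V onto W ⊆ V. Then the signed sum of csgn(c) over all nonzero reduced [u,w]-contributors c of G equals the signed sum of csgn(c) over only the edge-monic nonzero reduced [u,w]-contributors of G; equivalently, the sum of csgn(c) over the non-edge-monic nonzero reduced [u,w]-contributors is 0. -/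
open Matrix
open scoped Classical

noncomputable section

variable {V E I : Type*} [Fintype V] [DecidableEq V] [Fintype E] [DecidableEq E]
  [Fintype I] [DecidableEq I]

/-- A (nonzero) reduced `[u,w]`-contributor for the injection `φ : U → V` with image
`W`: a map `c : V∖U → I × I` whose tails sit at their vertices, whose tail and head
share an edge, and whose head map is a bijection from `V∖U` onto `V∖W`. -/
def IsRedCont (G : OHG V E I) (U : Finset V) (φ : {v : V // v ∈ U} ↪ V)
    (c : {v : V // v ∉ U} → I × I) : Prop :=
  (∀ v, G.vtx (c v).1 = v.1) ∧ (∀ v, G.edg (c v).1 = G.edg (c v).2) ∧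
    Set.BijOn (fun v : {v : V // v ∉ U} => G.vtx (c v).2) Set.univ
      {w : V | w ∉ Set.range φ}

/-- The completion `č` of a reduced contributor: the self-map of `V` agreeing with the
head map of `c` on `V∖U` and with `φ` on `U`. -/
def compFun (G : OHG V E I) (U : Finset V) (φ : {v : V // v ∈ U} ↪ V)
    (c : {v : V // v ∉ U} → I × I) : V → V :=
  fun v => if h : v ∈ U then φ ⟨v, h⟩ else G.vtx (c ⟨v, h⟩).2

/-- `ec č`: the number of even cycles of the completion of a reduced contributor. -/
def ecR (G : OHG V E I) (U : Finset V) (φ : {v : V // v ∈ U} ↪ V)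
    (c : {v : V // v ∉ U} → I × I) : ℕ :=
  ((orbitsOf (compFun G U φ c)).filter fun O => Even O.card).card

/-- `bs c`: the number of backsteps of a reduced contributor. -/
def bsR (U : Finset V) (c : {v : V // v ∉ U} → I × I) : ℕ :=
  (Finset.univ.filter fun v : {v : V // v ∉ U} => (c v).1 = (c v).2).card

/-- The arc relation of the digraph on `V` with an arc `v → ς (h_v)` for each
`v ∈ V∖U`. -/
def arcRel (G : OHG V E I) (U : Finset V) (c : {v : V // v ∉ U} → I × I) :
    V → V → Prop :=
  fun a b => ∃ v : {v : V // v ∉ U}, v.1 = a ∧ G.vtx (c v).2 = b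

/-- The connected component of `v` in the digraph of a reduced contributor. -/
def compOf (G : OHG V E I) (U : Finset V) (c : {v : V // v ∉ U} → I × I) (v : V) :
    Finset V :=
  Finset.univ.filter fun w => Relation.EqvGen (arcRel G U c) v w

/-- The components of a reduced contributor. -/
def compsOf (G : OHG V E I) (U : Finset V) (c : {v : V // v ∉ U} → I × I) :
    Finset (Finset V) :=
  Finset.univ.image (compOf G U c)

/-- A negative component: not a single backstep, and the product of the adjacency
signs `-σ(t_v)·σ(h_v)` over the arcs it contains is `-1`. -/
def NegComp (G : OHG V E I) (U : Finset V) (c : {v : V // v ∉ U} → I × I)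
    (O : Finset V) : Prop :=
  (¬ ∃ v : {v : V // v ∉ U}, O = {v.1} ∧ (c v).1 = (c v).2) ∧
    ∏ v ∈ Finset.univ.filter (fun v : {v : V // v ∉ U} => v.1 ∈ O),
      (-(G.sgn (c v).1 * G.sgn (c v).2)) = (-1 : ℤˣ)

/-- `nc c`: the number of negative components of a reduced contributor. -/
def ncR (G : OHG V E I) (U : Finset V) (c : {v : V // v ∉ U} → I × I) : ℕ :=
  ((compsOf G U c).filter (NegComp G U c)).card

/-- The sign `csgn c = (-1) ^ (ec č + nc c + bs c)` of a reduced contributor. -/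
def csgnR (G : OHG V E I) (U : Finset V) (φ : {v : V // v ∈ U} ↪ V)
    (c : {v : V // v ∉ U} → I × I) : ℤ :=
  (-1) ^ (ecR G U φ c + ncR G U c + bsR U c)

/-- A reduced contributor is edge-monic when its tail edges are pairwise distinct. -/
def EdgeMonicR (G : OHG V E I) (U : Finset V) (c : {v : V // v ∉ U} → I × I) : Prop :=
  Function.Injective fun v : {v : V // v ∉ U} => G.edg (c v).1

/-- The incidence matrix of an oriented hypergraph. -/
def incM (G : OHG V E I) : Matrix V E ℤ :=
  Matrix.of fun v e =>
    ∑ i ∈ Finset.univ.filter (fun i => G.vtx i = v ∧ G.edg i = e), (G.sgn i : ℤ)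

/-- The Laplacian `L = H Hᵀ` of an oriented hypergraph. -/
def lapM (G : OHG V E I) : Matrix V V ℤ :=
  incM G * (incM G)ᵀ

/-! ### Auxiliary lemmas -/

section Aux

theorem aux_orbitOf_perm (e : Equiv.Perm V) (v : V) :
    orbitOf ⇑e v = Finset.univ.filter fun w => e.SameCycle v w := by
  ext w
  simp only [orbitOf, Finset.mem_filter, Finset.mem_univ, true_and]
  constructor
  · rintro ⟨n, hn⟩
    refine ⟨(n : ℤ), ?_⟩
    rw [zpow_natCast, Equiv.Perm.coe_pow]
    exact hn
  · intro h
    obtain ⟨i, _, hiw⟩ := Equiv.Perm.SameCycle.exists_pow_eq' h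
    rw [Equiv.Perm.coe_pow] at hiw
    exact ⟨i, hiw⟩

theorem aux_orbitOf_fixed {e : Equiv.Perm V} {v : V} (h : e v = v) :
    orbitOf ⇑e v = {v} := by
  ext w
  simp only [orbitOf, Finset.mem_filter, Finset.mem_univ, true_and, Finset.mem_singleton]
  constructor
  · rintro ⟨n, hn⟩
    rw [Function.iterate_fixed h] at hn
    exact hn.symm
  · rintro rfl; exact ⟨0, rfl⟩

theorem aux_orbitOf_support {e : Equiv.Perm V} {v : V} (h : v ∈ e.support) :
    orbitOf ⇑e v = (e.cycleOf v).support := by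
  rw [aux_orbitOf_perm]
  ext w
  simp only [Finset.mem_filter, Finset.mem_univ, true_and,
    Equiv.Perm.mem_support_cycleOf_iff]
  exact ⟨fun hs => ⟨hs, h⟩, fun hs => hs.1⟩

theorem aux_card_even_orbits_eq (e : Equiv.Perm V) :
    ((orbitsOf ⇑e).filter fun O => Even O.card).card
      = (e.cycleFactorsFinset.filter fun g => Even g.support.card).card := by
  symm
  apply Finset.card_bij (fun g _ => Equiv.Perm.support g)
  · intro g hg
    simp only [Finset.mem_filter] at hg ⊢
    obtain ⟨hgf, hge⟩ := hg
    have hcyc := (Equiv.Perm.mem_cycleFactorsFinset_iff.mp hgf).1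
    obtain ⟨x, hx⟩ := hcyc.nonempty_support
    have hco : e.cycleOf x = g := (Equiv.Perm.cycle_is_cycleOf hx hgf).symm
    have hxe : x ∈ e.support := by
      rw [Equiv.Perm.mem_support,
        ← (Equiv.Perm.mem_cycleFactorsFinset_iff.mp hgf).2 x hx]
      exact Equiv.Perm.mem_support.mp hx
    refine ⟨?_, hge⟩
    simp only [orbitsOf]
    refine Finset.mem_image.mpr ⟨x, Finset.mem_univ _, ?_⟩
    rw [aux_orbitOf_support hxe, hco]
  · intro g hg g' hg' hss
    simp only [Finset.mem_filter] at hg hg'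
    have hcyc := (Equiv.Perm.mem_cycleFactorsFinset_iff.mp hg.1).1
    obtain ⟨x, hx⟩ := hcyc.nonempty_support
    have hx' : x ∈ g'.support := by rw [← hss]; exact hx
    rw [Equiv.Perm.cycle_is_cycleOf hx hg.1, Equiv.Perm.cycle_is_cycleOf hx' hg'.1]
  · intro O hO
    simp only [Finset.mem_filter] at hO
    obtain ⟨hOm, hOe⟩ := hO
    simp only [orbitsOf] at hOm
    obtain ⟨v, -, rfl⟩ := Finset.mem_image.mp hOm
    have hmove : e v ≠ v := by
      intro h
      rw [aux_orbitOf_fixed h] at hOe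
      simp at hOe
    have hv : v ∈ e.support := Equiv.Perm.mem_support.mpr hmove
    refine ⟨e.cycleOf v, ?_, (aux_orbitOf_support hv).symm⟩
    simp only [Finset.mem_filter]
    refine ⟨Equiv.Perm.cycleOf_mem_cycleFactorsFinset_iff.mpr hv, ?_⟩
    rwa [aux_orbitOf_support hv] at hOe

theorem aux_sign_eq_even_orbits (e : Equiv.Perm V) :
    Equiv.Perm.sign e
      = (-1 : ℤˣ) ^ ((orbitsOf ⇑e).filter fun O => Even O.card).card := by
  rw [Equiv.Perm.sign_of_cycleType, aux_card_even_orbits_eq]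
  have hsum : e.cycleType.sum = ∑ g ∈ e.cycleFactorsFinset, g.support.card := by
    rw [Equiv.Perm.cycleType_def]; rfl
  have hcard : Multiset.card e.cycleType = e.cycleFactorsFinset.card := by
    rw [Equiv.Perm.cycleType_def, Multiset.card_map]; rfl
  have h1 : e.cycleType.sum + Multiset.card e.cycleType
      = ∑ g ∈ e.cycleFactorsFinset, (g.support.card + 1) := by
    rw [hsum, hcard, Finset.sum_add_distrib, Finset.sum_const, smul_eq_mul, mul_one]
  rw [h1, ← Finset.prod_pow_eq_pow_sum]
  have h2 : ∀ g ∈ e.cycleFactorsFinset,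
      (-1 : ℤˣ) ^ (g.support.card + 1)
        = if Even g.support.card then (-1 : ℤˣ) else 1 := by
    intro g _
    rcases Nat.even_or_odd g.support.card with h | h
    · rw [if_pos h, Odd.neg_one_pow h.add_one]
    · rw [if_neg (Nat.not_even_iff_odd.mpr h), Even.neg_one_pow h.add_one]
  rw [Finset.prod_congr rfl h2, Finset.prod_ite]
  simp

end Aux
section Aux2

variable (G : OHG V E I) (U : Finset V)

theorem aux_mem_compOf {c : {v : V // v ∉ U} → I × I} {w v : V} :
    v ∈ compOf G U c w ↔ Relation.EqvGen (arcRel G U c) w v := by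
  simp [compOf]

theorem aux_compOf_eq_of_mem {c : {v : V // v ∉ U} → I × I} {w v : V}
    (h : v ∈ compOf G U c w) : compOf G U c w = compOf G U c v := by
  rw [aux_mem_compOf] at h
  ext x
  rw [aux_mem_compOf, aux_mem_compOf]
  have he := Relation.EqvGen.is_equivalence (arcRel G U c)
  exact ⟨fun hx => he.trans (he.symm h) hx, fun hx => he.trans h hx⟩

theorem aux_mem_iff_compOf_eq {c : {v : V // v ∉ U} → I × I} {v : V} {O : Finset V}
    (hO : O ∈ compsOf G U c) : v ∈ O ↔ compOf G U c v = O := by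
  simp only [compsOf, Finset.mem_image] at hO
  obtain ⟨w, -, rfl⟩ := hO
  constructor
  · intro h
    exact (aux_compOf_eq_of_mem G U h).symm
  · intro h
    rw [← h, aux_mem_compOf]
    exact Relation.EqvGen.refl v
 
theorem aux_backstep_comp {c : {v : V // v ∉ U} → I × I}
    (ht : ∀ v, G.vtx (c v).1 = v.1)
    (hinj : Function.Injective fun v : {v : V // v ∉ U} => G.vtx (c v).2)
    {v : {v : V // v ∉ U}} (hbs : (c v).1 = (c v).2) :
    compOf G U c v.1 = {v.1} := by
  have hloop : G.vtx (c v).2 = v.1 := by rw [← hbs]; exact ht v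
  have key : ∀ a b : V, Relation.EqvGen (arcRel G U c) a b → (a = v.1 ↔ b = v.1) := by
    intro a b h
    induction h with
    | rel a b hab =>
      obtain ⟨x, hx1, hx2⟩ := hab
      constructor
      · rintro rfl
        have hxv : x = v := Subtype.ext hx1
        rw [← hx2, hxv, hloop]
      · rintro rfl
        have : G.vtx (c x).2 = G.vtx (c v).2 := by rw [hx2, hloop]
        have hxv : x = v := hinj this
        rw [← hx1, hxv]
    | refl a => exact Iff.rfl
    | symm a b _ ih => exact ih.symm
    | trans a b c _ _ ih1 ih2 => exact ih1.trans ih2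
  ext w
  rw [aux_mem_compOf, Finset.mem_singleton]
  constructor
  · intro h
    exact (key v.1 w h).mp rfl
  · rintro rfl
    exact Relation.EqvGen.refl _

theorem aux_prod_formula {c : {v : V // v ∉ U} → I × I}
    (ht : ∀ v, G.vtx (c v).1 = v.1)
    (hinj : Function.Injective fun v : {v : V // v ∉ U} => G.vtx (c v).2) :
    ((-1 : ℤˣ)) ^ (ncR G U c + bsR U c)
      = ∏ v : {v : V // v ∉ U}, (-(G.sgn (c v).1 * G.sgn (c v).2)) := by
  classical
  set f : {v : V // v ∉ U} → ℤˣ := fun v => -(G.sgn (c v).1 * G.sgn (c v).2) with hf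
  set IsBk : Finset V → Prop :=
    fun O => ∃ v : {v : V // v ∉ U}, O = {v.1} ∧ (c v).1 = (c v).2 with hIsBk
  -- group the product by components
  have hmaps : ∀ v : {v : V // v ∉ U}, v ∈ Finset.univ →
      compOf G U c v.1 ∈ compsOf G U c := by
    intro v _
    exact Finset.mem_image.mpr ⟨v.1, Finset.mem_univ _, rfl⟩
  have hgroup := Finset.prod_fiberwise_of_maps_to hmaps f
  rw [← hgroup]
  -- rewrite each fiber as a membership filter
  have hfib : ∀ O ∈ compsOf G U c,
      (∏ v ∈ Finset.univ.filter fun v : {v : V // v ∉ U} => compOf G U c v.1 = O, f v)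
        = ∏ v ∈ Finset.univ.filter fun v : {v : V // v ∉ U} => v.1 ∈ O, f v := by
    intro O hO
    apply Finset.prod_congr _ (fun _ _ => rfl)
    apply Finset.filter_congr
    intro v _
    rw [aux_mem_iff_compOf_eq G U hO]
  rw [Finset.prod_congr rfl hfib]
  -- evaluate each component product
  have hval : ∀ O ∈ compsOf G U c,
      (∏ v ∈ Finset.univ.filter fun v : {v : V // v ∉ U} => v.1 ∈ O, f v)
        = if NegComp G U c O then -1 else if IsBk O then -1 else 1 := by
    intro O hO
    by_cases hneg : NegComp G U c O
    · rw [if_pos hneg]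
      exact hneg.2
    · rw [if_neg hneg]
      by_cases hbk : IsBk O
      · rw [if_pos hbk]
        obtain ⟨v, rfl, hbs⟩ := hbk
        have hfilter : (Finset.univ.filter
            fun v' : {v : V // v ∉ U} => v'.1 ∈ ({v.1} : Finset V)) = {v} := by
          ext v'
          simp [Subtype.ext_iff]
        rw [hfilter, Finset.prod_singleton, hf]
        simp only [← hbs, Int.units_mul_self]
      · rw [if_neg hbk]
        rcases Int.units_eq_one_or
            (∏ v ∈ Finset.univ.filter fun v : {v : V // v ∉ U} => v.1 ∈ O, f v)
          with h | h
        · exact h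
        · exact absurd ⟨hbk, h⟩ hneg
  rw [Finset.prod_congr rfl hval, Finset.prod_ite, Finset.prod_const, Finset.prod_ite,
    Finset.prod_const, Finset.prod_const, one_pow, mul_one, Finset.filter_filter]
  have hbk_card :
      ((compsOf G U c).filter fun O => ¬NegComp G U c O ∧ IsBk O).card = bsR U c := by
    rw [bsR]
    symm
    apply Finset.card_bij
      (fun (v : {v : V // v ∉ U}) _ => ({v.1} : Finset V))
    · intro v hv
      simp only [Finset.mem_filter, Finset.mem_univ, true_and] at hv
      simp only [Finset.mem_filter]
      refine ⟨?_, ?_, ⟨v, rfl, hv⟩⟩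
      · rw [← aux_backstep_comp G U ht hinj hv]
        exact Finset.mem_image.mpr ⟨v.1, Finset.mem_univ _, rfl⟩
      · intro hneg
        exact hneg.1 ⟨v, rfl, hv⟩
    · intro v _ w _ h
      exact Subtype.ext (Finset.singleton_injective h)
    · intro O hO
      simp only [Finset.mem_filter] at hO
      obtain ⟨-, -, v, rfl, hbs⟩ := hO
      exact ⟨v, by simp [hbs], rfl⟩
  rw [hbk_card, ncR, pow_add]

end Aux2
section Aux3

variable (G : OHG V E I) (U : Finset V) (φ : {v : V // v ∈ U} ↪ V)

theorem aux_compFun_bijective {c : {v : V // v ∉ U} → I × I}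
    (hc : IsRedCont G U φ c) : Function.Bijective (compFun G U φ c) := by
  rw [← Finite.injective_iff_bijective]
  have hinj2 : Function.Injective fun v : {v : V // v ∉ U} => G.vtx (c v).2 :=
    Set.injOn_univ.mp hc.2.2.injOn
  have hmaps : ∀ v : {v : V // v ∉ U}, G.vtx (c v).2 ∉ Set.range φ :=
    fun v => hc.2.2.mapsTo (Set.mem_univ v)
  intro x y hxy
  by_cases hx : x ∈ U <;> by_cases hy : y ∈ U
  · rw [compFun, compFun, dif_pos hx, dif_pos hy] at hxy
    exact congrArg Subtype.val (φ.injective hxy)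
  · rw [compFun, compFun, dif_pos hx, dif_neg hy] at hxy
    exact absurd ⟨⟨x, hx⟩, hxy⟩ (hmaps ⟨y, hy⟩)
  · rw [compFun, compFun, dif_neg hx, dif_pos hy] at hxy
    exact absurd ⟨⟨y, hy⟩, hxy.symm⟩ (hmaps ⟨x, hx⟩)
  · rw [compFun, compFun, dif_neg hx, dif_neg hy] at hxy
    exact congrArg Subtype.val (hinj2 hxy)

noncomputable def auxPerm {c : {v : V // v ∉ U} → I × I}
    (hc : IsRedCont G U φ c) : Equiv.Perm V :=
  Equiv.ofBijective _ (aux_compFun_bijective G U φ hc)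

theorem aux_sign_ec {c : {v : V // v ∉ U} → I × I} (hc : IsRedCont G U φ c) :
    Equiv.Perm.sign (auxPerm G U φ hc) = (-1 : ℤˣ) ^ ecR G U φ c := by
  rw [aux_sign_eq_even_orbits]
  rfl

/-- The tail-edge function of a contributor. -/
def tE (c : {v : V // v ∉ U} → I × I) : {v : V // v ∉ U} → E :=
  fun v => G.edg (c v).1

noncomputable def pkA {c : {v : V // v ∉ U} → I × I}
    (h : ¬ Function.Injective (tE G U c)) : {v : V // v ∉ U} :=
  (Function.not_injective_iff.mp h).choose

noncomputable def pkB {c : {v : V // v ∉ U} → I × I}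
    (h : ¬ Function.Injective (tE G U c)) : {v : V // v ∉ U} :=
  (Function.not_injective_iff.mp h).choose_spec.choose

theorem pk_spec {c : {v : V // v ∉ U} → I × I}
    (h : ¬ Function.Injective (tE G U c)) :
    tE G U c (pkA G U h) = tE G U c (pkB G U h) ∧ pkA G U h ≠ pkB G U h :=
  (Function.not_injective_iff.mp h).choose_spec.choose_spec

/-- The head-swapping involution at the canonical repeated-tail-edge pair. -/
noncomputable def flipC (c : {v : V // v ∉ U} → I × I)
    (h : ¬ Function.Injective (tE G U c)) : {v : V // v ∉ U} → I × I :=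
  fun v => ((c v).1, (c (Equiv.swap (pkA G U h) (pkB G U h) v)).2)

theorem tE_flipC (c : {v : V // v ∉ U} → I × I)
    (h : ¬ Function.Injective (tE G U c)) :
    tE G U (flipC G U c h) = tE G U c := rfl

theorem flipC_flipC (c : {v : V // v ∉ U} → I × I)
    (h : ¬ Function.Injective (tE G U c))
    (h' : ¬ Function.Injective (tE G U (flipC G U c h))) :
    flipC G U (flipC G U c h) h' = c := by
  funext v
  show ((c v).1, (c (Equiv.swap (pkA G U h) (pkB G U h)
      (Equiv.swap (pkA G U h) (pkB G U h) v))).2) = c v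
  rw [Equiv.swap_apply_self]

theorem tE_swap (c : {v : V // v ∉ U} → I × I)
    (h : ¬ Function.Injective (tE G U c)) (v : {v : V // v ∉ U}) :
    tE G U c (Equiv.swap (pkA G U h) (pkB G U h) v) = tE G U c v := by
  rcases eq_or_ne v (pkA G U h) with rfl | hvp
  · rw [Equiv.swap_apply_left]
    exact (pk_spec G U h).1.symm
  rcases eq_or_ne v (pkB G U h) with rfl | hvq
  · rw [Equiv.swap_apply_right]
    exact (pk_spec G U h).1
  · rw [Equiv.swap_apply_of_ne_of_ne hvp hvq]

theorem flipC_isRedCont {c : {v : V // v ∉ U} → I × I}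
    (hc : IsRedCont G U φ c) (h : ¬ Function.Injective (tE G U c)) :
    IsRedCont G U φ (flipC G U c h) := by
  refine ⟨fun v => hc.1 v, fun v => ?_, ?_⟩
  · show G.edg (c v).1 = G.edg (c (Equiv.swap (pkA G U h) (pkB G U h) v)).2
    rw [← hc.2.1]
    exact (tE_swap G U c h v).symm
  · have : (fun v : {v : V // v ∉ U} => G.vtx (flipC G U c h v).2)
        = (fun v : {v : V // v ∉ U} => G.vtx (c v).2)
          ∘ ⇑(Equiv.swap (pkA G U h) (pkB G U h)) := rfl
    rw [this]
    exact hc.2.2.comp (Equiv.swap (pkA G U h) (pkB G U h)).bijective.bijOn_univ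

theorem flipC_not_monic {c : {v : V // v ∉ U} → I × I}
    (h : ¬ Function.Injective (tE G U c)) :
    ¬ EdgeMonicR G U (flipC G U c h) := h

theorem flipC_ne {c : {v : V // v ∉ U} → I × I}
    (hc : IsRedCont G U φ c) (h : ¬ Function.Injective (tE G U c)) :
    flipC G U c h ≠ c := by
  intro heq
  have hinj2 : Function.Injective fun v : {v : V // v ∉ U} => G.vtx (c v).2 :=
    Set.injOn_univ.mp hc.2.2.injOn
  have h1 := congrArg (fun c' : {v : V // v ∉ U} → I × I =>
    G.vtx (c' (pkA G U h)).2) heq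
  simp only [flipC, Equiv.swap_apply_left] at h1
  exact (pk_spec G U h).2 ((hinj2 h1).symm)

theorem compFun_flipC {c : {v : V // v ∉ U} → I × I}
    (h : ¬ Function.Injective (tE G U c)) :
    compFun G U φ (flipC G U c h)
      = compFun G U φ c ∘ ⇑(Equiv.swap (pkA G U h).1 (pkB G U h).1) := by
  set p := pkA G U h
  set q := pkB G U h
  funext v
  by_cases hv : v ∈ U
  · have h1 : Equiv.swap p.1 q.1 v = v :=
      Equiv.swap_apply_of_ne_of_ne (fun hh => p.2 (hh ▸ hv)) (fun hh => q.2 (hh ▸ hv))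
    show compFun G U φ (flipC G U c h) v = compFun G U φ c (Equiv.swap p.1 q.1 v)
    rw [h1, compFun, compFun, dif_pos hv, dif_pos hv]
  · have h1 : Equiv.swap p.1 q.1 v = (Equiv.swap p q ⟨v, hv⟩).1 := by
      rcases eq_or_ne v p.1 with hvp | hvp
      · have : (⟨v, hv⟩ : {v : V // v ∉ U}) = p := Subtype.ext hvp
        rw [this, Equiv.swap_apply_left, hvp, Equiv.swap_apply_left]
      rcases eq_or_ne v q.1 with hvq | hvq
      · have : (⟨v, hv⟩ : {v : V // v ∉ U}) = q := Subtype.ext hvq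
        rw [this, Equiv.swap_apply_right, hvq, Equiv.swap_apply_right]
      · rw [Equiv.swap_apply_of_ne_of_ne hvp hvq,
          Equiv.swap_apply_of_ne_of_ne (fun hh => hvp (congrArg Subtype.val hh))
            (fun hh => hvq (congrArg Subtype.val hh))]
    show compFun G U φ (flipC G U c h) v = compFun G U φ c (Equiv.swap p.1 q.1 v)
    rw [compFun, dif_neg hv, h1, compFun, dif_neg (Equiv.swap p q ⟨v, hv⟩).2]
    rfl

theorem prod_flipC {c : {v : V // v ∉ U} → I × I}
    (h : ¬ Function.Injective (tE G U c)) :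
    (∏ v : {v : V // v ∉ U}, (-(G.sgn (flipC G U c h v).1 * G.sgn (flipC G U c h v).2)))
      = ∏ v : {v : V // v ∉ U}, (-(G.sgn (c v).1 * G.sgn (c v).2)) := by
  have hform : ∀ c' : {v : V // v ∉ U} → I × I,
      (∏ v : {v : V // v ∉ U}, (-(G.sgn (c' v).1 * G.sgn (c' v).2)))
        = (∏ v : {v : V // v ∉ U}, (-(G.sgn (c' v).1)))
          * ∏ v : {v : V // v ∉ U}, G.sgn (c' v).2 := by
    intro c'
    rw [← Finset.prod_mul_distrib]
    exact Finset.prod_congr rfl fun v _ => (neg_mul _ _).symm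
  rw [hform, hform]
  have h2 : (∏ v : {v : V // v ∉ U}, G.sgn (flipC G U c h v).2)
      = ∏ v : {v : V // v ∉ U}, G.sgn (c v).2 :=
    Equiv.prod_comp (Equiv.swap (pkA G U h) (pkB G U h)) (fun v => G.sgn (c v).2)
  have h1 : (∏ v : {v : V // v ∉ U}, (-(G.sgn (flipC G U c h v).1)))
      = ∏ v : {v : V // v ∉ U}, (-(G.sgn (c v).1)) := rfl
  rw [h1, h2]

theorem csgnR_eq_units (c : {v : V // v ∉ U} → I × I) (hc : IsRedCont G U φ c) :
    csgnR G U φ c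
      = ((Equiv.Perm.sign (auxPerm G U φ hc)
          * ∏ v : {v : V // v ∉ U}, (-(G.sgn (c v).1 * G.sgn (c v).2)) : ℤˣ) : ℤ) := by
  rw [aux_sign_ec, ← aux_prod_formula G U hc.1
    (Set.injOn_univ.mp hc.2.2.injOn), csgnR, ← pow_add, ← add_assoc]
  push_cast
  rfl

theorem csgnR_flipC {c : {v : V // v ∉ U} → I × I}
    (hc : IsRedCont G U φ c) (h : ¬ Function.Injective (tE G U c)) :
    csgnR G U φ (flipC G U c h) = - csgnR G U φ c := by
  rw [csgnR_eq_units G U φ c hc,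
    csgnR_eq_units G U φ (flipC G U c h) (flipC_isRedCont G U φ hc h)]
  have hperm : auxPerm G U φ (flipC_isRedCont G U φ hc h)
      = auxPerm G U φ hc * Equiv.swap (pkA G U h).1 (pkB G U h).1 := by
    apply Equiv.ext
    intro x
    show compFun G U φ (flipC G U c h) x
      = compFun G U φ c (Equiv.swap (pkA G U h).1 (pkB G U h).1 x)
    rw [compFun_flipC]
    rfl
  have hne : (pkA G U h).1 ≠ (pkB G U h).1 :=
    fun hh => (pk_spec G U h).2 (Subtype.ext hh)
  rw [hperm, MonoidHom.map_mul, Equiv.Perm.sign_swap hne, prod_flipC]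
  push_cast [mul_neg, mul_one, neg_mul]
  ring

end Aux3
/-- For any injection `φ` from `U ⊆ V` into `V` (with image `W`), the
signed sum of `csgn` over all nonzero reduced `[u,w]`-contributors equals the signed
sum over only the edge-monic ones; equivalently the sum over the non-edge-monic
nonzero reduced `[u,w]`-contributors is `0`. -/
theorem sum_csgnR_eq_sum_edgeMonic (G : OHG V E I) (U : Finset V)
    (φ : {v : V // v ∈ U} ↪ V) :
    (∑ c ∈ Finset.univ.filter (fun c : {v : V // v ∉ U} → I × I => IsRedCont G U φ c),
        csgnR G U φ c
      = ∑ c ∈ Finset.univ.filter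
          (fun c : {v : V // v ∉ U} → I × I => IsRedCont G U φ c ∧ EdgeMonicR G U c),
          csgnR G U φ c) ∧
    (∑ c ∈ Finset.univ.filter
        (fun c : {v : V // v ∉ U} → I × I => IsRedCont G U φ c ∧ ¬ EdgeMonicR G U c),
        csgnR G U φ c = 0) := by
  have h2 : (∑ c ∈ Finset.univ.filter
      (fun c : {v : V // v ∉ U} → I × I => IsRedCont G U φ c ∧ ¬ EdgeMonicR G U c),
      csgnR G U φ c) = 0 := by
    have hmem : ∀ c ∈ Finset.univ.filter
        (fun c : {v : V // v ∉ U} → I × I => IsRedCont G U φ c ∧ ¬ EdgeMonicR G U c),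
        IsRedCont G U φ c ∧ ¬ Function.Injective (tE G U c) := by
      intro c hcc
      have := (Finset.mem_filter.mp hcc).2
      exact this
    apply Finset.sum_involution (fun c hcc => flipC G U c (hmem c hcc).2)
    · intro c hcc
      rw [csgnR_flipC G U φ (hmem c hcc).1 (hmem c hcc).2]
      ring
    · intro c hcc _
      exact flipC_ne G U φ (hmem c hcc).1 (hmem c hcc).2
    · intro c hcc
      exact flipC_flipC G U c _ _
    · intro c hcc
      refine Finset.mem_filter.mpr ⟨Finset.mem_univ _,
        flipC_isRedCont G U φ (hmem c hcc).1 _, flipC_not_monic G U _⟩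
  refine ⟨?_, h2⟩
  have key := Finset.sum_filter_add_sum_filter_not
    (Finset.univ.filter fun c : {v : V // v ∉ U} → I × I => IsRedCont G U φ c)
    (fun c => EdgeMonicR G U c) (csgnR G U φ)
  rw [Finset.filter_filter, Finset.filter_filter] at key
  rw [← key]
  rw [h2, add_zero]
end
end
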